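/- arXiv:0901.3374 — 3 statements merged into one kernel-verified Lean document; each statement's English description precedes it below -/
import Mathlib

section
/- Let G be a countable group acting freely and measure-preservingly on a probability space (X, μ), with orbit equivalence relation measure ν on R_α. For η in the image of ℓ²(G) inside L²(R_α) (i.e., η is constant equal to η(g) on each graph {(α(g)x, x)}), and for a measurable set A ⊆ X with characteristic projection q = χ_A acting by multiplication in both the left variable and (via the involution J) the right variable, one has ‖η − q J q J η‖² ≤ (2 − 2 μ(A)) ‖η‖², where (Jξ)(x,y) = conj(ξ(y,x)). -/
open MeasureTheory
open scoped ENNReal NNReal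

/-- with `ν` the Feldman–Moore measure of a free m.p. action `α` of a
countable group `G` on the probability space `(X, μ)`, if `η` lies in the embedded copy of
`ℓ²(G)` in `L²(R_α)` (a.e. constant `c g` on the graph of each `α g`), and `q = χ_A` acts
on `L²(R_α)` in the left variable and `JqJ` in the right variable (so `qJqJη` is the
restriction of `η` to `A × A`), then `‖η − qJqJη‖² ≤ (2 − 2 μ(A)) ‖η‖²`. -/
theorem norm_sq_sub_corner_restriction_le
    {X : Type*} [MeasurableSpace X] (μ : Measure X) [IsProbabilityMeasure μ]
    {G : Type*} [Group G] [Countable G]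
    (α : G → X → X)
    (hmeas : ∀ g, Measurable (α g))
    (hmul : ∀ g h x, α (g * h) x = α g (α h x)) (hone : ∀ x, α 1 x = x)
    (hmp : ∀ g, MeasurePreserving (α g) μ μ)
    (hfree : ∀ᵐ x ∂μ, ∀ g : G, α g x = x → g = 1)
    (ν : Measure (X × X))
    (hν : ν = Measure.sum fun g : G => Measure.map (fun x => (α g x, x)) μ)
    (η : X × X → ℂ) (hη : Measurable η)
    (c : G → ℂ) (hconst : ∀ g : G, ∀ᵐ x ∂μ, η (α g x, x) = c g)
    (A : Set X) (hA : MeasurableSet A) :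
    ∫⁻ p, (‖η p - (A ×ˢ A).indicator η p‖₊ : ℝ≥0∞) ^ 2 ∂ν
      ≤ (2 - 2 * μ A) * ∫⁻ p, (‖η p‖₊ : ℝ≥0∞) ^ 2 ∂ν := by

  subst hν
  have ha1 : μ A ≤ 1 := prob_le_one
  have hind : Measurable ((A ×ˢ A).indicator η) := hη.indicator (hA.prod hA)
  have hf1 : Measurable fun p => (‖η p - (A ×ˢ A).indicator η p‖₊ : ℝ≥0∞) ^ 2 :=
    ((hη.sub hind).nnnorm.coe_nnreal_ennreal).pow_const 2
  have hf2 : Measurable fun p => (‖η p‖₊ : ℝ≥0∞) ^ 2 :=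
    (hη.nnnorm.coe_nnreal_ennreal).pow_const 2
  rw [lintegral_sum_measure, lintegral_sum_measure]
  have key : ∀ g : G,
      (∫⁻ p, (‖η p - (A ×ˢ A).indicator η p‖₊ : ℝ≥0∞) ^ 2
          ∂(Measure.map (fun x => (α g x, x)) μ))
        ≤ (2 - 2 * μ A) *
          ∫⁻ p, (‖η p‖₊ : ℝ≥0∞) ^ 2 ∂(Measure.map (fun x => (α g x, x)) μ) := by
    intro g
    have hm : Measurable fun x => (α g x, x) := (hmeas g).prodMk measurable_id
    rw [lintegral_map hf1 hm, lintegral_map hf2 hm]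
    set E : Set X := (α g) ⁻¹' A ∩ A with hE
    have hEm : MeasurableSet E := ((hmeas g) hA).inter hA
    have h1 : (∫⁻ x, (‖η (α g x, x) - (A ×ˢ A).indicator η (α g x, x)‖₊ : ℝ≥0∞) ^ 2 ∂μ)
        = (‖c g‖₊ : ℝ≥0∞) ^ 2 * μ Eᶜ := by
      rw [← lintegral_indicator_const hEm.compl]
      refine lintegral_congr_ae ?_
      filter_upwards [hconst g] with x hx
      by_cases hxE : x ∈ E
      · have hmem : (α g x, x) ∈ A ×ˢ A := ⟨hxE.1, hxE.2⟩
        simp [Set.indicator_of_mem hmem, Set.indicator_of_notMem (Set.notMem_compl_iff.2 hxE)]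
      · have hmem : (α g x, x) ∉ A ×ˢ A := by
          intro h; exact hxE ⟨h.1, h.2⟩
        simp [Set.indicator_of_notMem hmem, Set.indicator_of_mem (Set.mem_compl hxE), hx]
    have h2 : (∫⁻ x, (‖η (α g x, x)‖₊ : ℝ≥0∞) ^ 2 ∂μ) = (‖c g‖₊ : ℝ≥0∞) ^ 2 := by
      have : (∫⁻ x, (‖η (α g x, x)‖₊ : ℝ≥0∞) ^ 2 ∂μ)
          = ∫⁻ _, (‖c g‖₊ : ℝ≥0∞) ^ 2 ∂μ := by
        refine lintegral_congr_ae ?_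
        filter_upwards [hconst g] with x hx
        rw [hx]
      rw [this, lintegral_const, measure_univ, mul_one]
    rw [h1, h2]
    have hcompl : μ Eᶜ ≤ 2 - 2 * μ A := by
      have hsub : Eᶜ ⊆ ((α g) ⁻¹' A)ᶜ ∪ Aᶜ := by
        rw [hE, Set.compl_inter]
      have hpre : μ (((α g) ⁻¹' A)ᶜ) = 1 - μ A := by
        have : (α g) ⁻¹' Aᶜ = ((α g) ⁻¹' A)ᶜ := rfl
        rw [← this, (hmp g).measure_preimage hA.compl.nullMeasurableSet,
          prob_compl_eq_one_sub hA]
      have hAc : μ Aᶜ = 1 - μ A := prob_compl_eq_one_sub hA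
      have harith : (1 - μ A) + (1 - μ A) = 2 - 2 * μ A := by
        have h2a : 2 * μ A ≠ ∞ := by
          refine ENNReal.mul_ne_top (by norm_num) ?_
          exact ne_top_of_le_ne_top ENNReal.one_ne_top ha1
        refine ENNReal.eq_sub_of_add_eq h2a ?_
        have hcancel : (1 - μ A) + μ A = 1 := tsub_add_cancel_of_le ha1
        calc (1 - μ A) + (1 - μ A) + 2 * μ A
            = ((1 - μ A) + μ A) + ((1 - μ A) + μ A) := by rw [two_mul]; ring
          _ = 2 := by rw [hcancel]; norm_num
      calc μ Eᶜ ≤ μ (((α g) ⁻¹' A)ᶜ ∪ Aᶜ) := measure_mono hsub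
        _ ≤ μ (((α g) ⁻¹' A)ᶜ) + μ Aᶜ := measure_union_le _ _
        _ = 2 - 2 * μ A := by rw [hpre, hAc, harith]
    calc (‖c g‖₊ : ℝ≥0∞) ^ 2 * μ Eᶜ ≤ (‖c g‖₊ : ℝ≥0∞) ^ 2 * (2 - 2 * μ A) :=
          mul_le_mul_right hcompl _
      _ = (2 - 2 * μ A) * (‖c g‖₊ : ℝ≥0∞) ^ 2 := mul_comm _ _
  calc (∑' g : G, ∫⁻ p, (‖η p - (A ×ˢ A).indicator η p‖₊ : ℝ≥0∞) ^ 2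
          ∂(Measure.map (fun x => (α g x, x)) μ))
      ≤ ∑' g : G, (2 - 2 * μ A) *
          ∫⁻ p, (‖η p‖₊ : ℝ≥0∞) ^ 2 ∂(Measure.map (fun x => (α g x, x)) μ) :=
        ENNReal.tsum_le_tsum key
    _ = (2 - 2 * μ A) * ∑' g : G,
          ∫⁻ p, (‖η p‖₊ : ℝ≥0∞) ^ 2 ∂(Measure.map (fun x => (α g x, x)) μ) :=
        ENNReal.tsum_mul_left
end

section
/- Let Γ be a countable group acting by measure-preserving transformations β on a measure space (Y, μ), let X ⊆ Y with μ(X) = 1, and let G act freely measure-preservingly on X by α with α(G)x ⊆ β(Γ)x for a.e. x ∈ X. For g ∈ G and a finite set Γ₀ ⊆ Γ, let q ∈ L∞(X) be a projection. Then q f(g) ≤ e(Γ₀) (as projections on L²(R_β)) if and only if there exists a measurable partition {q_γ : γ ∈ Γ₀} of q in L∞(X) such that q v_g = ∑_{γ ∈ Γ₀} q_γ u_γ, where v_g and u_γ are the unitaries/isometries implementing α(g) and β(γ), and f(g), e(γ) are the projections onto functions supported on the graphs of α(g) and β(γ) respectively. -/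
open MeasureTheory
open scoped ENNReal


lemma eqset_meas {α Y : Type*} [MeasurableSpace α] [MeasurableSpace Y] [StandardBorelSpace Y]
    {f h : α → Y} (hf : Measurable f) (hh : Measurable h) :
    MeasurableSet {x | f x = h x} := by
  letI := upgradeStandardBorel Y
  exact MeasureTheory.StronglyMeasurable.measurableSet_eq_fun hf.stronglyMeasurable
    hh.stronglyMeasurable

/-- with `β` a free m.p. action of `Γ` on `(Y, μ)`, `X ⊆ Y` of measure `1`,
and `α` a free m.p. action of `G` on `X` with `α`-orbits inside `β`-orbits, let `ν` be the
Feldman–Moore measure on `R_β`, let `g ∈ G`, `Γ₀ ⊆ Γ` finite, and let `q = χ_A` be a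
projection in `L∞(X)`. Then `q f(g) ≤ e(Γ₀)` — i.e. `ν`-a.e. point of the graph of `α g`
over `A` lies in `⋃_{γ ∈ Γ₀}` (graph of `β γ`) — if and only if there is a measurable
partition `{q γ}_{γ ∈ Γ₀}` of `q` (a.e.) in `L∞(X)` such that `q v_g = ∑_{γ ∈ Γ₀} q_γ u_γ`,
i.e. a.e. on `q γ` the transformation `α g` agrees with `β γ`. -/

theorem corner_le_iff_partition
    {Y : Type*} [MeasurableSpace Y] [StandardBorelSpace Y]
    (μ : Measure Y) [SigmaFinite μ]
    {Γ : Type*} [Group Γ] [Countable Γ]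
    (β : Γ → Y → Y)
    (hβmeas : ∀ γ, Measurable (β γ))
    (hβmul : ∀ γ δ y, β (γ * δ) y = β γ (β δ y)) (hβone : ∀ y, β 1 y = y)
    (hβmp : ∀ γ, MeasurePreserving (β γ) μ μ)
    (hβfree : ∀ᵐ y ∂μ, ∀ γ : Γ, β γ y = y → γ = 1)
    (X : Set Y) (hX : MeasurableSet X) (hX1 : μ X = 1)
    {G : Type*} [Group G] [Countable G]
    (α : G → Y → Y)
    (hαmeas : ∀ g, Measurable (α g))
    (hαX : ∀ g, Set.MapsTo (α g) X X)
    (hαmul : ∀ g h, ∀ x ∈ X, α (g * h) x = α g (α h x))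
    (hαone : ∀ x ∈ X, α 1 x = x)
    (hαmp : ∀ g, MeasurePreserving (α g) (μ.restrict X) (μ.restrict X))
    (hαfree : ∀ᵐ x ∂μ.restrict X, ∀ g : G, α g x = x → g = 1)
    (horb : ∀ᵐ x ∂μ.restrict X, ∀ g : G, ∃ γ : Γ, α g x = β γ x)
    (ν : Measure (Y × Y))
    (hν : ν = Measure.sum fun γ : Γ => Measure.map (fun y => (β γ y, y)) μ)
    (g : G) (Γ₀ : Finset Γ)
    (A : Set Y) (hA : MeasurableSet A) (hAX : A ⊆ X) :
    ν ({p : Y × Y | p.2 ∈ A ∧ p.1 = α g p.2} \ ⋃ γ ∈ Γ₀, {p : Y × Y | p.1 = β γ p.2}) = 0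
      ↔
    ∃ q : Γ → Set Y,
      (∀ γ, MeasurableSet (q γ)) ∧ (∀ γ, q γ ⊆ A) ∧ (∀ γ ∉ Γ₀, q γ = ∅) ∧
      Pairwise (Function.onFun Disjoint q) ∧ μ (A \ ⋃ γ : Γ, q γ) = 0 ∧
      (∀ γ : Γ, ∀ᵐ x ∂μ, x ∈ q γ → α g x = β γ x) := by
  classical
  set S : Set (Y × Y) :=
    {p : Y × Y | p.2 ∈ A ∧ p.1 = α g p.2} \ ⋃ γ ∈ Γ₀, {p : Y × Y | p.1 = β γ p.2} with hSdef
  have hS : MeasurableSet S := by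
    apply MeasurableSet.diff
    · rw [Set.setOf_and]
      exact (hA.preimage measurable_snd).inter
        (eqset_meas measurable_fst ((hαmeas g).comp measurable_snd))
    · exact MeasurableSet.biUnion Γ₀.countable_toSet
        (fun δ _ => eqset_meas measurable_fst ((hβmeas δ).comp measurable_snd))
  have hmem : ∀ (γ : Γ) (y : Y),
      ((β γ y, y) ∈ S) ↔ (y ∈ A ∧ β γ y = α g y ∧ ∀ δ ∈ Γ₀, β γ y ≠ β δ y) := by
    intro γ y
    simp only [hSdef, Set.mem_diff, Set.mem_setOf_eq, Set.mem_iUnion, not_exists, exists_prop]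
    tauto
  have hkey : ν S = ∑' γ : Γ, μ ((fun y => (β γ y, y)) ⁻¹' S) := by
    rw [hν, Measure.sum_apply _ hS]
    exact tsum_congr fun γ =>
      Measure.map_apply ((hβmeas γ).prodMk measurable_id) hS
  have hiff : ν S = 0 ↔ ∀ γ : Γ, μ ((fun y => (β γ y, y)) ⁻¹' S) = 0 := by
    rw [hkey, ENNReal.tsum_eq_zero]
  have hfree2 : ∀ᵐ y ∂μ, ∀ γ δ : Γ, β γ y = β δ y → γ = δ := by
    filter_upwards [hβfree] with y hy γ δ hγδ
    have h1 : β (δ⁻¹ * γ) y = y := by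
      rw [hβmul, hγδ, ← hβmul, inv_mul_cancel, hβone]
    exact (inv_mul_eq_one.mp (hy _ h1)).symm
  have horb' : ∀ᵐ y ∂μ, y ∈ X → ∃ γ : Γ, α g y = β γ y := by
    filter_upwards [(ae_restrict_iff' hX).mp horb] with y hy hyX using hy hyX g
  constructor
  · intro h
    have hpre : ∀ γ : Γ, μ ((fun y => (β γ y, y)) ⁻¹' S) = 0 := hiff.mp h
    have hprae : ∀ᵐ y ∂μ, ∀ γ : Γ, ¬ ((β γ y, y) ∈ S) := by
      rw [ae_all_iff]
      intro γ
      exact (measure_eq_zero_iff_ae_notMem.mp (hpre γ))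
    set Good : Set Y := {y | ∀ γ δ : Γ, β γ y = β δ y → γ = δ} with hGdef
    have hGoodm : MeasurableSet Good := by
      have : Good = ⋂ γ : Γ, ⋂ δ : Γ, {y | β γ y = β δ y → γ = δ} := by
        ext y; simp [hGdef]
      rw [this]
      refine MeasurableSet.iInter fun γ => MeasurableSet.iInter fun δ => ?_
      by_cases h' : γ = δ
      · have : {y | β γ y = β δ y → γ = δ} = Set.univ := by ext y; simp [h']
        rw [this]; exact MeasurableSet.univ
      · have : {y | β γ y = β δ y → γ = δ} = {y | β γ y = β δ y}ᶜ := by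
          ext y; simp [h']
        rw [this]
        exact (eqset_meas (hβmeas γ) (hβmeas δ)).compl
    refine ⟨fun γ => if γ ∈ Γ₀ then (A ∩ {y | α g y = β γ y}) ∩ Good else ∅,
      ?_, ?_, ?_, ?_, ?_, ?_⟩
    · intro γ
      by_cases h' : γ ∈ Γ₀
      · simp only [if_pos h']
        exact (hA.inter (eqset_meas (hαmeas g) (hβmeas γ))).inter hGoodm
      · simp only [if_neg h']; exact MeasurableSet.empty
    · intro γ
      by_cases h' : γ ∈ Γ₀
      · intro y hy; simp only [if_pos h'] at hy; exact hy.1.1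
      · simp only [if_neg h']; exact Set.empty_subset A
    · intro γ h'; simp only [if_neg h']
    · intro γ δ hγδ
      simp only [Function.onFun]
      by_cases hγ : γ ∈ Γ₀
      · by_cases hδ : δ ∈ Γ₀
        · simp only [if_pos hγ, if_pos hδ]
          rw [Set.disjoint_left]
          rintro y ⟨⟨hyA, hy1⟩, hyG⟩ ⟨⟨-, hy2⟩, -⟩
          exact hγδ (hyG γ δ (by rw [← hy1, ← hy2]))
        · simp only [if_neg hδ]; exact Set.disjoint_empty _
      · simp only [if_neg hγ]; exact Set.empty_disjoint _
    · have hae : ∀ᵐ y ∂μ, y ∈ A →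
          y ∈ ⋃ γ : Γ, (if γ ∈ Γ₀ then (A ∩ {y | α g y = β γ y}) ∩ Good else ∅) := by
        filter_upwards [hfree2, horb', hprae] with y hfr hor hnp hyA
        obtain ⟨γ, hγ⟩ := hor (hAX hyA)
        have := hnp γ
        rw [hmem] at this
        push_neg at this
        obtain ⟨δ, hδΓ, hδeq⟩ := this hyA hγ.symm
        refine Set.mem_iUnion.mpr ⟨δ, ?_⟩
        simp only [if_pos hδΓ]
        exact ⟨⟨hyA, show α g y = β δ y from hγ.trans hδeq⟩, hfr⟩
      refine measure_mono_null ?_ (ae_iff.mp hae)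
      intro y hy
      simp only [Set.mem_setOf_eq, Classical.not_imp]
      exact ⟨hy.1, hy.2⟩
    · intro γ
      refine Filter.Eventually.of_forall fun y hy => ?_
      by_cases h' : γ ∈ Γ₀
      · simp only [if_pos h'] at hy
        exact hy.1.2
      · simp only [if_neg h'] at hy
        exact absurd hy (Set.notMem_empty y)
  · rintro ⟨q, hqm, hqA, hqΓ, hqdis, hqcov, hqeq⟩
    refine hiff.mpr fun γ => ?_
    have hcov_ae : ∀ᵐ y ∂μ, y ∈ A → y ∈ ⋃ δ : Γ, q δ := by
      rw [ae_iff]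
      refine measure_mono_null ?_ hqcov
      intro y hy
      simp only [Set.mem_setOf_eq, Classical.not_imp] at hy
      exact ⟨hy.1, hy.2⟩
    have heq_ae : ∀ᵐ y ∂μ, ∀ δ : Γ, y ∈ q δ → α g y = β δ y := ae_all_iff.mpr hqeq
    rw [measure_eq_zero_iff_ae_notMem]
    filter_upwards [hcov_ae, heq_ae] with y hcov heq hyS
    rw [Set.mem_preimage, hmem] at hyS
    obtain ⟨hyA, hyeq, hne⟩ := hyS
    obtain ⟨δ, hyδ⟩ := Set.mem_iUnion.mp (hcov hyA)
    have hδΓ : δ ∈ Γ₀ := by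
      by_contra h'
      rw [hqΓ δ h'] at hyδ
      exact hyδ
    exact hne δ hδΓ (by rw [hyeq, heq δ hyδ])
end

section
/- If G is a countable group in Ozawa's class S and H ⊆ G is a subgroup whose centralizer Z_G(H) is non-amenable, then H is finite. -/
section ClassS

variable (G : Type) [Group G]

/-- The left-times-right translation `x ↦ s.1 * x * s.2⁻¹` of `s : G × G` on `G`, extended
continuously to the Stone–Čech compactification `βG` of the discrete space `G`. -/
noncomputable def lrTranslationExt [TopologicalSpace G] [DiscreteTopology G]
    (s : G × G) : StoneCech G → StoneCech G :=
  stoneCechExtend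
    (continuous_stoneCechUnit.comp
      (continuous_of_discreteTopology (f := fun x : G => s.1 * x * s.2⁻¹)))

/-- The corona `βG ∖ G` of the discrete group `G`: the complement in the Stone–Čech
compactification of the (open, discrete) image of `G`. -/
def corona [TopologicalSpace G] : Set (StoneCech G) :=
  {z | z ∉ Set.range (stoneCechUnit : G → StoneCech G)}

/-- Ozawa's class `S`: the countable group `G` belongs to `S` when the left-times-right
translation action of `G × G` on the corona `βG ∖ G` is (topologically) amenable, i.e.
there exist weak-*-continuous, almost equivariant maps from `βG ∖ G` to the probability
measures on `G × G`. -/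
def InClassS : Prop :=
  letI : TopologicalSpace G := ⊥
  haveI : DiscreteTopology G := ⟨rfl⟩
  ∀ (F : Finset (G × G)) (ε : ℝ), 0 < ε →
    ∃ m : StoneCech G → G × G → ℝ,
      (∀ z ∈ corona G, ∀ s : G × G, 0 ≤ m z s) ∧
      (∀ z ∈ corona G, HasSum (m z) 1) ∧
      (∀ s : G × G, ContinuousOn (fun z => m z s) (corona G)) ∧
      (∀ s ∈ F, ∀ z ∈ corona G,
        ∑' t : G × G, |m (lrTranslationExt G s z) t - m z (s⁻¹ * t)| ≤ ε)

end ClassS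

/-- A group is amenable: it admits a left-invariant finitely additive probability measure. -/
def IsAmenableGroup (G : Type*) [Group G] : Prop :=
  ∃ m : Set G → ℝ,
    m Set.univ = 1 ∧ (∀ A : Set G, 0 ≤ m A) ∧
    (∀ A B : Set G, Disjoint A B → m (A ∪ B) = m A + m B) ∧
    (∀ (g : G) (A : Set G), m ((g * ·) '' A) = m A)

open Filter Set Topology in
/-- A group admitting almost-invariant finitely additive probability measures (for every
finite set of group elements and every tolerance `1/(n+1)`) is amenable: take an
ultrafilter limit. -/
theorem isAmenableGroup_of_almost_invariant {Γ : Type*} [Group Γ]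
    (h : ∀ (F : Finset Γ) (n : ℕ), ∃ ν : Set Γ → ℝ,
      ν Set.univ = 1 ∧ (∀ A : Set Γ, 0 ≤ ν A) ∧ (∀ A : Set Γ, ν A ≤ 1) ∧
      (∀ A B : Set Γ, Disjoint A B → ν (A ∪ B) = ν A + ν B) ∧
      (∀ g ∈ F, ∀ A : Set Γ, |ν ((g * ·) '' A) - ν A| ≤ 1 / ((n : ℝ) + 1))) :
    IsAmenableGroup Γ := by
  classical
  choose ν h1 h2 h3 h4 h5 using fun i : Finset Γ × ℕ => h i.1 i.2
  let U : Ultrafilter (Finset Γ × ℕ) := Ultrafilter.of atTop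
  have hU : (U : Filter (Finset Γ × ℕ)) ≤ atTop := Ultrafilter.of_le _
  have key : ∀ A : Set Γ, ∃ c, c ∈ Set.Icc (0 : ℝ) 1 ∧
      Tendsto (fun i => ν i A) (U : Filter (Finset Γ × ℕ)) (𝓝 c) := by
    intro A
    obtain ⟨c, hc, hle⟩ := (isCompact_Icc (a := (0 : ℝ)) (b := 1)).ultrafilter_le_nhds
      (U.map fun i => ν i A)
      (by
        rw [Ultrafilter.coe_map, Filter.le_principal_iff, Filter.mem_map]
        exact Filter.univ_mem' fun i => ⟨h2 i A, h3 i A⟩)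
    exact ⟨c, hc, by rwa [Ultrafilter.coe_map] at hle⟩
  choose mA hIcc hT using key
  refine ⟨mA, ?_, fun A => (hIcc A).1, ?_, ?_⟩
  · exact tendsto_nhds_unique (hT Set.univ)
      (tendsto_const_nhds.congr fun i => (h1 i).symm)
  · intro A B hAB
    exact tendsto_nhds_unique (hT (A ∪ B))
      (((hT A).add (hT B)).congr fun i => (h4 i A B hAB).symm)
  · intro g A
    have hsnd : Tendsto (fun i : Finset Γ × ℕ => 1 / ((i.2 : ℝ) + 1))
        (U : Filter (Finset Γ × ℕ)) (𝓝 0) := by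
      have hs : Tendsto (Prod.snd : Finset Γ × ℕ → ℕ) atTop atTop := by
        rw [← Filter.prod_atTop_atTop_eq]; exact Filter.tendsto_snd
      exact (tendsto_one_div_add_atTop_nhds_zero_nat.comp hs).mono_left hU
    have hd : Tendsto (fun i => ν i ((g * ·) '' A) - ν i A)
        (U : Filter (Finset Γ × ℕ)) (𝓝 0) := by
      apply squeeze_zero_norm' ?_ hsnd
      have hev : ∀ᶠ i in (atTop : Filter (Finset Γ × ℕ)), g ∈ i.1 :=
        Filter.eventually_atTop.2 ⟨({g}, 0), fun i hi => hi.1 (Finset.mem_singleton_self g)⟩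
      exact Filter.Eventually.filter_mono hU
        (hev.mono fun i hi => by simpa [Real.norm_eq_abs] using h5 i g hi A)
    have h6 := (hT ((g * ·) '' A)).sub (hT A)
    have h0 := tendsto_nhds_unique h6 hd
    linarith

/-- if a countable group `G` is in Ozawa's class `S` and `H ≤ G` has
non-amenable centralizer `Z_G(H)`, then `H` is finite. -/
theorem finite_of_inClassS_of_nonamenable_centralizer
    (G : Type) [Group G] [Countable G] (hS : InClassS G)
    (H : Subgroup G) (hZ : ¬ IsAmenableGroup (Subgroup.centralizer (H : Set G))) :
    Finite H := by
  classical
  by_contra hfin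
  rw [not_finite_iff_infinite] at hfin
  have hHinf : (H : Set G).Infinite := Set.infinite_coe_iff.mp hfin
  letI : TopologicalSpace G := ⊥
  haveI : DiscreteTopology G := ⟨rfl⟩
  haveI : Nonempty G := ⟨1⟩
  set Zgrp : Subgroup G := Subgroup.centralizer (H : Set G) with hZgrp
  -- an ultrafilter containing `H` and all cofinite sets
  have hLne : (Filter.cofinite ⊓ Filter.principal (H : Set G)).NeBot := by
    rw [Filter.inf_principal_neBot_iff]
    intro U hU
    have : ((H : Set G) \ Uᶜ).Nonempty := (hHinf.diff hU).nonempty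
    obtain ⟨x, hxH, hxU⟩ := this
    exact ⟨x, by simpa using hxU, hxH⟩
  let V : Ultrafilter G := Ultrafilter.of (Filter.cofinite ⊓ Filter.principal (H : Set G))
  have hV : (V : Filter G) ≤ Filter.cofinite ⊓ Filter.principal (H : Set G) :=
    Ultrafilter.of_le _
  -- the limit point `z ∈ βG` of `V`
  obtain ⟨z, hz⟩ : ∃ z : StoneCech G,
      Filter.Tendsto (stoneCechUnit : G → StoneCech G) (V : Filter G) (nhds z) := by
    obtain ⟨z, -, hle⟩ := isCompact_univ.ultrafilter_le_nhds (V.map stoneCechUnit)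
      (by simp)
    rw [Ultrafilter.coe_map] at hle
    exact ⟨z, hle⟩
  -- `z` lies in the corona
  have hzcor : z ∈ corona G := by
    intro hmem
    obtain ⟨g₀, hg₀⟩ := hmem
    have hχ : Continuous (fun x : G => (decide (x = g₀) : Bool)) :=
      continuous_of_discreteTopology
    have hFz : Filter.Tendsto (fun x : G => (decide (x = g₀) : Bool)) (V : Filter G)
        (nhds (stoneCechExtend hχ z)) := by
      have := ((continuous_stoneCechExtend hχ).tendsto z).comp hz
      refine this.congr fun x => ?_
      exact congrFun (stoneCechExtend_extends hχ) x
    have hev : ∀ᶠ x : G in (V : Filter G), (decide (x = g₀) : Bool) = false := by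
      have hcf : {x : G | x ≠ g₀} ∈ Filter.cofinite := Filter.eventually_cofinite_ne g₀
      have hmm : {x : G | x ≠ g₀} ∈ (V : Filter G) :=
        hV (Filter.mem_inf_of_left hcf)
      filter_upwards [hmm] with x hx
      simp [hx]
    have hfalse : stoneCechExtend hχ z = false :=
      tendsto_nhds_unique (hFz.congr' hev) tendsto_const_nhds
    have htrue : stoneCechExtend hχ z = true := by
      rw [← hg₀]
      have := congrFun (stoneCechExtend_extends hχ) g₀
      simpa using this
    rw [htrue] at hfalse
    exact Bool.noConfusion hfalse
  -- `z` is fixed by the diagonal action of the centralizer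
  have hzcl : z ∈ closure (stoneCechUnit '' (H : Set G)) := by
    apply mem_closure_of_tendsto hz
    have hmemH : (H : Set G) ∈ (V : Filter G) :=
      hV (Filter.mem_inf_of_right (Filter.mem_principal_self _))
    filter_upwards [hmemH] with x hx
    exact Set.mem_image_of_mem _ hx
  have hfix : ∀ c : G, c ∈ Zgrp → lrTranslationExt G (c, c) z = z := by
    intro c hc
    have hcont : Continuous (lrTranslationExt G (c, c)) := by
      unfold lrTranslationExt
      exact continuous_stoneCechExtend _
    have heq : Set.EqOn (lrTranslationExt G (c, c)) id (stoneCechUnit '' (H : Set G)) := by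
      rintro _ ⟨x, hxH, rfl⟩
      have h1 : lrTranslationExt G (c, c) (stoneCechUnit x) = stoneCechUnit (c * x * c⁻¹) :=
        congrFun (stoneCechExtend_extends _) x
      have h2 : c * x * c⁻¹ = x := by
        have hcomm : x * c = c * x := Subgroup.mem_centralizer_iff.mp hc x hxH
        rw [← hcomm]
        group
      rw [h1, h2]
      rfl
    exact heq.closure hcont continuous_id hzcl
  -- the retraction `ψ : G → Zgrp` onto right cosets of the centralizer
  let sd : Setoid G :=
    ⟨fun x y => x * y⁻¹ ∈ Zgrp, by
      constructor
      · intro x; rw [mul_inv_cancel]; exact one_mem _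
      · intro x y hxy
        have := inv_mem hxy
        simpa [mul_inv_rev] using this
      · intro x y w hxy hyw
        have := mul_mem hxy hyw
        simpa [mul_assoc] using this⟩
  let σ : G → G := fun x => (Quotient.mk sd x).out
  have hσmem : ∀ x : G, x * (σ x)⁻¹ ∈ Zgrp := by
    intro x
    have h := Quotient.mk_out (s := sd) x
    have h' : σ x * x⁻¹ ∈ Zgrp := h
    have := inv_mem h'
    simpa [mul_inv_rev] using this
  have hσeq : ∀ (c x : G), c ∈ Zgrp → σ (c * x) = σ x := by
    intro c x hc
    have : Quotient.mk sd (c * x) = Quotient.mk sd x := by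
      apply Quotient.sound
      show (c * x) * x⁻¹ ∈ Zgrp
      simpa [mul_assoc] using hc
    simp only [σ, this]
  let ψ : G → Zgrp := fun x => ⟨x * (σ x)⁻¹, hσmem x⟩
  have hψ : ∀ (c : Zgrp) (x : G), ψ ((c : G) * x) = c * ψ x := by
    intro c x
    apply Subtype.ext
    show ((c : G) * x) * (σ ((c : G) * x))⁻¹ = (c : G) * (x * (σ x)⁻¹)
    rw [hσeq _ _ c.2, mul_assoc]
  -- almost invariant finitely additive measures on `Zgrp`
  apply hZ
  apply isAmenableGroup_of_almost_invariant
  intro F n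
  have hε : (0 : ℝ) < 1 / ((n : ℝ) + 1) := by positivity
  obtain ⟨m, hpos, hsum, -, hinv⟩ :=
    hS (F.image fun c : Zgrp => (((c : G))⁻¹, ((c : G))⁻¹)) (1 / ((n : ℝ) + 1)) hε
  set μ : G × G → ℝ := m z with hμ
  have hμ0 : ∀ t, 0 ≤ μ t := hpos z hzcor
  have hμ1 : HasSum μ 1 := hsum z hzcor
  have hsummable : Summable μ := hμ1.summable
  have hbound : ∀ c : Zgrp, c ∈ F →
      ∑' t : G × G, |μ t - μ (((c : G), (c : G)) * t)| ≤ 1 / ((n : ℝ) + 1) := by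
    intro c hcF
    have hmemF' : (((c : G))⁻¹, ((c : G))⁻¹) ∈
        F.image fun c : Zgrp => (((c : G))⁻¹, ((c : G))⁻¹) :=
      Finset.mem_image_of_mem _ hcF
    have h := hinv _ hmemF' z hzcor
    have hfx : lrTranslationExt G (((c : G))⁻¹, ((c : G))⁻¹) z = z :=
      hfix _ (inv_mem c.2)
    rw [hfx] at h
    simpa using h
  -- the pushforward measures
  let S : Set Zgrp → Set (G × G) := fun A => {t : G × G | ψ t.1 ∈ A}
  let ν : Set Zgrp → ℝ := fun A => ∑' t : G × G, Set.indicator (S A) μ t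
  have hsumInd : ∀ A : Set Zgrp, Summable (Set.indicator (S A) μ) := fun A =>
    hsummable.indicator _
  have hν0 : ∀ A : Set Zgrp, 0 ≤ ν A := fun A =>
    tsum_nonneg fun t => Set.indicator_nonneg (fun x _ => hμ0 x) t
  have hν1 : ∀ A : Set Zgrp, ν A ≤ 1 := by
    intro A
    have hle : ∀ t, Set.indicator (S A) μ t ≤ μ t := fun t =>
      Set.indicator_le_self' (fun x _ => hμ0 x) t
    calc ν A ≤ ∑' t, μ t := Summable.tsum_le_tsum hle (hsumInd A) hsummable
    _ = 1 := hμ1.tsum_eq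
  refine ⟨ν, ?_, hν0, hν1, ?_, ?_⟩
  · -- total mass
    have : S Set.univ = Set.univ := by ext t; simp [S]
    simp only [ν, this, Set.indicator_univ]
    exact hμ1.tsum_eq
  · -- finite additivity
    intro A B hAB
    have hSu : S (A ∪ B) = S A ∪ S B := by ext t; simp [S]
    have hdisj : Disjoint (S A) (S B) := by
      rw [Set.disjoint_left]
      intro t htA htB
      exact Set.disjoint_left.mp hAB htA htB
    have : ∀ t, Set.indicator (S (A ∪ B)) μ t
        = Set.indicator (S A) μ t + Set.indicator (S B) μ t := by
      intro t
      rw [hSu, Set.indicator_union_of_disjoint hdisj]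
    calc ν (A ∪ B) = ∑' t, (Set.indicator (S A) μ t + Set.indicator (S B) μ t) :=
          tsum_congr this
      _ = ν A + ν B := Summable.tsum_add (hsumInd A) (hsumInd B)
  · -- almost invariance
    intro c hcF A
    set a : G × G := ((c : G), (c : G)) with ha
    have hmem : ∀ t : G × G, a * t ∈ S ((c * ·) '' A) ↔ t ∈ S A := by
      intro t
      have h1 : (a * t).1 = (c : G) * t.1 := rfl
      show ψ (a * t).1 ∈ (c * ·) '' A ↔ ψ t.1 ∈ A
      rw [h1, hψ c t.1]
      exact (mul_right_injective c).mem_set_image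
    have hsa : Summable fun t : G × G => μ (a * t) := by
      have := (Equiv.mulLeft a).summable_iff (f := μ)
      have h2 := this.mpr hsummable
      exact h2
    have hstep1 : ν ((c * ·) '' A)
        = ∑' t : G × G, Set.indicator (S A) (fun t => μ (a * t)) t := by
      have h1 : ∑' t : G × G, Set.indicator (S ((c * ·) '' A)) μ ((Equiv.mulLeft a) t)
          = ν ((c * ·) '' A) := (Equiv.mulLeft a).tsum_eq _
      rw [← h1]
      apply tsum_congr
      intro t
      have hcoe : (Equiv.mulLeft a) t = a * t := rfl
      rw [hcoe]
      by_cases ht : t ∈ S A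
      · rw [Set.indicator_of_mem ((hmem t).mpr ht), Set.indicator_of_mem ht]
      · rw [Set.indicator_of_notMem (fun h' => ht ((hmem t).mp h')),
          Set.indicator_of_notMem ht]
    have hinda : Summable (Set.indicator (S A) fun t => μ (a * t)) := hsa.indicator _
    have hdiffsum : Summable fun t : G × G => μ (a * t) - μ t := hsa.sub hsummable
    have habs : Summable fun t : G × G => |μ (a * t) - μ t| := hdiffsum.abs
    have hstep2 : ν ((c * ·) '' A) - ν A
        = ∑' t : G × G, Set.indicator (S A) (fun t => μ (a * t) - μ t) t := by
      rw [hstep1]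
      rw [← Summable.tsum_sub hinda (hsumInd A)]
      apply tsum_congr
      intro t
      by_cases ht : t ∈ S A
      · rw [Set.indicator_of_mem ht, Set.indicator_of_mem ht, Set.indicator_of_mem ht]
      · rw [Set.indicator_of_notMem ht, Set.indicator_of_notMem ht,
          Set.indicator_of_notMem ht]
        ring
    have hindabs : (fun t : G × G => ‖Set.indicator (S A) (fun t => μ (a * t) - μ t) t‖)
        = Set.indicator (S A) fun t => |μ (a * t) - μ t| := by
      funext t
      by_cases ht : t ∈ S A
      · rw [Set.indicator_of_mem ht, Set.indicator_of_mem ht, Real.norm_eq_abs]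
      · rw [Set.indicator_of_notMem ht, Set.indicator_of_notMem ht, norm_zero]
    have hsumabs : Summable fun t : G × G =>
        ‖Set.indicator (S A) (fun t => μ (a * t) - μ t) t‖ := by
      rw [hindabs]; exact habs.indicator _
    calc |ν ((c * ·) '' A) - ν A|
        = ‖∑' t : G × G, Set.indicator (S A) (fun t => μ (a * t) - μ t) t‖ := by
          rw [hstep2, Real.norm_eq_abs]
      _ ≤ ∑' t : G × G, ‖Set.indicator (S A) (fun t => μ (a * t) - μ t) t‖ :=
          norm_tsum_le_tsum_norm hsumabs
      _ ≤ ∑' t : G × G, |μ (a * t) - μ t| := by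
          apply Summable.tsum_le_tsum _ hsumabs habs
          intro t
          rw [congrFun hindabs t]
          exact Set.indicator_le_self' (fun x _ => abs_nonneg _) t
      _ = ∑' t : G × G, |μ t - μ (a * t)| := by
          apply tsum_congr; intro t; rw [abs_sub_comm]
      _ ≤ 1 / ((n : ℝ) + 1) := hbound c hcF
end
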